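/- A binary relation ⪰ on a closed, mixture-closed set C of Anscombe–Aumann acts satisfies extended mixture cancellation and has closed graph if and only if there exists a set U of functions u : S × O → ℝ such that for all a, b ∈ C: a ⪰ b if and only if ∑_{s∈S} ∑_{o∈O} u(s,o)·a(s)(o) ≥ ∑_{s∈S} ∑_{o∈O} u(s,o)·b(s)(o) for every u ∈ U. -/

import Mathlib

set_option maxHeartbeats 1000000
set_option synthInstance.maxHeartbeats 1000000
set_option linter.unusedSectionVars false

open scoped Pointwise

/-- An Anscombe–Aumann act: a map assigning to each state a probability vector over outcomes. -/
def IsAAAct {S O : Type*} [Fintype O] (a : S → O → ℝ) : Prop :=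
  ∀ s, (∀ o, 0 ≤ a s o) ∧ (∑ o, a s o = 1)

/-- Extended mixture cancellation for a relation on a subset of a real vector space. -/
def ExtMixCancel {V : Type*} [AddCommGroup V] [Module ℝ V]
    (C : Set V) (R : V → V → Prop) : Prop :=
  ∀ (n : ℕ) (a b : Fin (n + 1) → V),
    (∀ i, a i ∈ C) → (∀ i, b i ∈ C) →
    (∑ i, a i = ∑ i, b i) →
    (∃ k, k ≤ n ∧ (∀ i : Fin (n + 1), (i : ℕ) < k → R (a i) (b i)) ∧
      (∀ i : Fin (n + 1), k ≤ (i : ℕ) → a i = a (Fin.last n) ∧ b i = b (Fin.last n))) →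
    R (b (Fin.last n)) (a (Fin.last n))

/-- The graph `{(a, b) ∈ C × C : a ⪰ b}` is closed. -/
def ClosedGraphOn {V : Type*} [TopologicalSpace V] (C : Set V) (R : V → V → Prop) : Prop :=
  IsClosed {p : V × V | p.1 ∈ C ∧ p.2 ∈ C ∧ R p.1 p.2}

lemma ball_in_span {V : Type*} [NormedAddCommGroup V] [NormedSpace ℝ V] [FiniteDimensional ℝ V]
    (D Γ : Set V) (hΓconv : Convex ℝ Γ) (hDΓ : D ⊆ Γ) (hDΓneg : ∀ d ∈ D, -d ∈ Γ)
    (h0 : (0:V) ∈ Γ) :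
    ∃ r : ℝ, 0 < r ∧ ∀ w ∈ Submodule.span ℝ D, ‖w‖ ≤ r → w ∈ Γ := by
  classical
  obtain ⟨bs, hbsD, hbspan, hbli⟩ := exists_linearIndependent ℝ D
  haveI : Fintype bs := hbli.setFinite.fintype
  set W := Submodule.span ℝ (Set.range ((↑) : bs → V)) with hW
  have hWD : W = Submodule.span ℝ D := by rw [hW, Subtype.range_coe, hbspan]
  set B : Module.Basis bs ℝ W := Module.Basis.span hbli with hB
  set ec : W →L[ℝ] (bs → ℝ) := LinearMap.toContinuousLinearMap B.equivFun.toLinearMap with hec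
  set M : ℝ := ‖ec‖ with hM
  have hMnn : 0 ≤ M := by rw [hM]; exact norm_nonneg ec
  set card : ℕ := Fintype.card bs with hcard
  refine ⟨1 / (card * M + 1), by positivity, fun w hw hwr => ?_⟩
  set w' : W := ⟨w, hWD ▸ hw⟩ with hw'
  set lam : bs → ℝ := ec w' with hlam
  have hbound : ∀ i, |lam i| ≤ M * ‖w‖ := by
    intro i
    have h1 : ‖lam i‖ ≤ ‖lam‖ := norm_le_pi_norm lam i
    have h2 : ‖lam‖ ≤ M * ‖w'‖ := ec.le_opNorm w'
    have h3 : ‖w'‖ = ‖w‖ := rfl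
    rw [h3] at h2
    calc |lam i| = ‖lam i‖ := rfl
      _ ≤ ‖lam‖ := h1
      _ ≤ M * ‖w‖ := h2
  have hsumabs : ∑ i, |lam i| ≤ 1 := by
    calc ∑ i, |lam i| ≤ ∑ _i : bs, M * ‖w‖ := Finset.sum_le_sum fun i _ => hbound i
      _ = card * (M * ‖w‖) := by rw [Finset.sum_const, Finset.card_univ, nsmul_eq_mul]
      _ ≤ card * (M * (1 / (card * M + 1))) := by
          refine mul_le_mul_of_nonneg_left (mul_le_mul_of_nonneg_left hwr hMnn)
            (Nat.cast_nonneg card)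
      _ ≤ 1 := by
          rw [← mul_assoc]
          rw [mul_one_div]
          rw [div_le_one (by positivity)]
          linarith
  have hrecon : w = ∑ i : bs, lam i • (i : V) := by
    have h1 : ∑ i : bs, B.equivFun w' i • B i = w' := B.sum_equivFun w'
    calc w = (w' : V) := rfl
      _ = ↑(∑ i : bs, B.equivFun w' i • B i) := by rw [h1]
      _ = ∑ i : bs, lam i • (i : V) := by
          rw [Submodule.coe_sum]
          refine Finset.sum_congr rfl fun i _ => ?_
          rw [Submodule.coe_smul]
          congr 1
          rw [hB, Module.Basis.span_apply]
  -- convex combination over Option bs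
  set wt : Option bs → ℝ := fun j => Option.rec (1 - ∑ i, |lam i|) (fun i => |lam i|) j with hwt
  set pt : Option bs → V :=
    fun j => Option.rec 0 (fun i => if 0 ≤ lam i then (i : V) else -(i : V)) j with hpt
  have hwtnn : ∀ j ∈ Finset.univ, 0 ≤ wt j := by
    rintro (_ | i) _
    · simp only [hwt]; linarith
    · simp only [hwt]; positivity
  have hwtsum : ∑ j, wt j = 1 := by
    rw [Fintype.sum_option]
    simp only [hwt]; ring
  have hptmem : ∀ j ∈ Finset.univ, pt j ∈ Γ := by
    rintro (_ | i) _
    · exact h0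
    · simp only [hpt]
      split_ifs
      · exact hDΓ (hbsD i.2)
      · exact hDΓneg _ (hbsD i.2)
  have := hΓconv.sum_mem hwtnn hwtsum hptmem
  have hexpr : ∑ j, wt j • pt j = w := by
    rw [Fintype.sum_option]
    have hnone : wt none • pt none = 0 := by simp [hwt, hpt]
    rw [hnone, zero_add]
    rw [hrecon]
    refine Finset.sum_congr rfl fun i _ => ?_
    simp only [hwt, hpt]
    split_ifs with h
    · rw [abs_of_nonneg h]
    · rw [abs_of_neg (lt_of_not_ge h)]; rw [smul_neg, neg_smul, neg_neg]
  rwa [hexpr] at this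


section Aux
variable {S O : Type*} [Fintype S] [Fintype O]

noncomputable def utilFun (u : S → O → ℝ) : (S → O → ℝ) →L[ℝ] ℝ :=
  LinearMap.toContinuousLinearMap
  { toFun := fun x => ∑ s, ∑ o, u s o * x s o
    map_add' := by intro x y; simp [mul_add, Finset.sum_add_distrib]
    map_smul' := by
      intro c x
      simp only [Pi.smul_apply, smul_eq_mul, RingHom.id_apply, Finset.mul_sum]
      congr 1; ext s; congr 1; ext o; ring }

lemma utilFun_apply (u x : S → O → ℝ) : utilFun u x = ∑ s, ∑ o, u s o * x s o := rfl

lemma pi_decomp [DecidableEq S] [DecidableEq O] (x : S → O → ℝ) :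
    x = ∑ s, ∑ o, x s o • (Pi.single s (Pi.single o (1:ℝ)) : S → O → ℝ) := by
  funext s' o'
  symm
  rw [Finset.sum_apply, Finset.sum_apply]
  simp only [Finset.sum_apply, Pi.smul_apply, Pi.single_apply, smul_eq_mul, mul_ite, mul_one,
    mul_zero, ite_apply, Pi.zero_apply]
  simp [Finset.sum_ite_eq]

lemma exists_utilFun (f : (S → O → ℝ) →L[ℝ] ℝ) :
    ∃ u : S → O → ℝ, ∀ x, utilFun u x = f x := by
  classical
  refine ⟨fun s o => f ((Pi.single s (Pi.single o (1:ℝ)) : S → O → ℝ)), fun x => ?_⟩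
  rw [utilFun_apply]
  conv_rhs => rw [pi_decomp x]
  rw [map_sum]
  refine Finset.sum_congr rfl fun s _ => ?_
  rw [map_sum]
  refine Finset.sum_congr rfl fun o _ => ?_
  rw [map_smul, smul_eq_mul, mul_comm]

variable (C : Set (S → O → ℝ)) (R : (S → O → ℝ) → (S → O → ℝ) → Prop)

lemma aux_refl (hE : ExtMixCancel C R) {a : S → O → ℝ} (ha : a ∈ C) : R a a := by
  have := hE 0 (fun _ => a) (fun _ => a) (fun _ => ha) (fun _ => ha) rfl
    ⟨0, le_refl _, fun i hi => absurd hi (by omega), fun i _ => ⟨rfl, rfl⟩⟩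
  exact this

lemma sum_three_blocks {V : Type*} [AddCommGroup V] (p q N : ℕ) (x y z : V) :
    ∑ j ∈ Finset.range (p + q + N),
      (if j < p then x else if j < p + q then y else z) = p • x + q • y + N • z := by
  rw [Finset.range_eq_Ico,
    ← Finset.sum_Ico_consecutive _ (Nat.zero_le (p+q)) (by omega : p+q ≤ p+q+N),
    ← Finset.sum_Ico_consecutive _ (Nat.zero_le p) (by omega : p ≤ p+q)]
  have e1 : ∀ j ∈ Finset.Ico 0 p, (if j < p then x else if j < p + q then y else z) = x := by
    intro j hj; rw [Finset.mem_Ico] at hj; rw [if_pos hj.2]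
  have e2 : ∀ j ∈ Finset.Ico p (p+q), (if j < p then x else if j < p + q then y else z) = y := by
    intro j hj; rw [Finset.mem_Ico] at hj; rw [if_neg (by omega), if_pos hj.2]
  have e3 : ∀ j ∈ Finset.Ico (p+q) (p+q+N),
      (if j < p then x else if j < p + q then y else z) = z := by
    intro j hj; rw [Finset.mem_Ico] at hj; rw [if_neg (by omega), if_neg (by omega)]
  have h1 := Finset.sum_congr rfl e1
  have h2 := Finset.sum_congr rfl e2
  have h3 := Finset.sum_congr rfl e3
  rw [h1, h2, h3]
  simp

lemma aux_L1 (hE : ExtMixCancel C R) {p q N : ℕ} (hN : 0 < N)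
    {x1 y1 x2 y2 a b : S → O → ℝ}
    (hx1 : x1 ∈ C) (hy1 : y1 ∈ C) (hx2 : x2 ∈ C) (hy2 : y2 ∈ C) (ha : a ∈ C) (hb : b ∈ C)
    (h1 : R x1 y1) (h2 : R x2 y2)
    (hsum : p • x1 + q • x2 + N • b = p • y1 + q • y2 + N • a) : R a b := by
  set n := p + q + (N - 1) with hn
  have hn1 : n + 1 = p + q + N := by omega
  set A : Fin (n+1) → (S → O → ℝ) :=
    fun i => if (i:ℕ) < p then x1 else if (i:ℕ) < p + q then x2 else b with hA
  set B : Fin (n+1) → (S → O → ℝ) :=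
    fun i => if (i:ℕ) < p then y1 else if (i:ℕ) < p + q then y2 else a with hB
  have hsumA : ∑ i, A i = p • x1 + q • x2 + N • b := by
    rw [hA, Fin.sum_univ_eq_sum_range (fun j => if j < p then x1 else if j < p + q then x2 else b),
      hn1, sum_three_blocks]
  have hsumB : ∑ i, B i = p • y1 + q • y2 + N • a := by
    rw [hB, Fin.sum_univ_eq_sum_range (fun j => if j < p then y1 else if j < p + q then y2 else a),
      hn1, sum_three_blocks]
  have hlast : (Fin.last n : ℕ) = n := rfl
  have hlastA : A (Fin.last n) = b := by
    rw [hA]; simp only [hlast]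
    rw [if_neg (by omega), if_neg (by omega)]
  have hlastB : B (Fin.last n) = a := by
    rw [hB]; simp only [hlast]
    rw [if_neg (by omega), if_neg (by omega)]
  have := hE n A B
    (fun i => by dsimp only [A]; split_ifs <;> assumption)
    (fun i => by dsimp only [B]; split_ifs <;> assumption)
    (by rw [hsumA, hsumB, hsum])
    ⟨p + q, by omega, ?_, ?_⟩
  · rwa [hlastA, hlastB] at this
  · intro i hi
    dsimp only [A, B]
    by_cases h : (i:ℕ) < p
    · rw [if_pos h, if_pos h]; exact h1
    · rw [if_neg h, if_neg h, if_pos hi, if_pos hi]; exact h2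
  · intro i hi
    constructor
    · rw [hlastA]; dsimp only [A]; rw [if_neg (by omega), if_neg (by omega)]
    · rw [hlastB]; dsimp only [B]; rw [if_neg (by omega), if_neg (by omega)]


lemma aux_mix_rat (hE : ExtMixCancel C R)
    (hmix : ∀ a ∈ C, ∀ b ∈ C, ∀ r : ℝ, 0 ≤ r → r ≤ 1 → r • a + (1 - r) • b ∈ C)
    {x1 y1 x2 y2 : S → O → ℝ}
    (hx1 : x1 ∈ C) (hy1 : y1 ∈ C) (hx2 : x2 ∈ C) (hy2 : y2 ∈ C)
    (h1 : R x1 y1) (h2 : R x2 y2) {p m : ℕ} (hm : 0 < m) (hpm : p ≤ m) :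
    R (((p:ℝ)/m) • x1 + (1 - (p:ℝ)/m) • x2) (((p:ℝ)/m) • y1 + (1 - (p:ℝ)/m) • y2) := by
  have hθ0 : (0:ℝ) ≤ (p:ℝ)/m := by positivity
  have hθ1 : (p:ℝ)/m ≤ 1 := by
    rw [div_le_one (by exact_mod_cast hm)]; exact_mod_cast hpm
  have hmR : (m:ℝ) ≠ 0 := by exact_mod_cast hm.ne'
  refine aux_L1 C R hE (p := p) (q := m - p) (N := m) hm hx1 hy1 hx2 hy2
    (hmix _ hx1 _ hx2 _ hθ0 hθ1) (hmix _ hy1 _ hy2 _ hθ0 hθ1) h1 h2 ?_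
  have hc : ((m - p : ℕ) : ℝ) = (m:ℝ) - p := by
    rw [Nat.cast_sub hpm]
  rw [← Nat.cast_smul_eq_nsmul ℝ p, ← Nat.cast_smul_eq_nsmul ℝ (m - p),
    ← Nat.cast_smul_eq_nsmul ℝ m, ← Nat.cast_smul_eq_nsmul ℝ p,
    ← Nat.cast_smul_eq_nsmul ℝ (m - p), ← Nat.cast_smul_eq_nsmul ℝ m, hc]
  match_scalars <;> field_simp

lemma aux_mix (hE : ExtMixCancel C R) (hG : ClosedGraphOn C R)
    (hmix : ∀ a ∈ C, ∀ b ∈ C, ∀ r : ℝ, 0 ≤ r → r ≤ 1 → r • a + (1 - r) • b ∈ C)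
    {x1 y1 x2 y2 : S → O → ℝ}
    (hx1 : x1 ∈ C) (hy1 : y1 ∈ C) (hx2 : x2 ∈ C) (hy2 : y2 ∈ C)
    (h1 : R x1 y1) (h2 : R x2 y2) {θ : ℝ} (hθ0 : 0 ≤ θ) (hθ1 : θ ≤ 1) :
    R (θ • x1 + (1 - θ) • x2) (θ • y1 + (1 - θ) • y2) := by
  set θk : ℕ → ℝ := fun k => (⌊θ * (k:ℝ)⌋₊ : ℝ) / (k:ℝ) with hθk
  have htend : Filter.Tendsto θk Filter.atTop (nhds θ) := by
    have := (tendsto_nat_floor_mul_div_atTop (a := θ) hθ0).comp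
      tendsto_natCast_atTop_atTop (α := ℕ)
    exact this
  have hmem : ∀ k : ℕ, 1 ≤ k →
      (θk k • x1 + (1 - θk k) • x2, θk k • y1 + (1 - θk k) • y2) ∈
        {p : (S → O → ℝ) × (S → O → ℝ) | p.1 ∈ C ∧ p.2 ∈ C ∧ R p.1 p.2} := by
    intro k hk
    have hkpos : (0:ℕ) < k := hk
    have hfl : ⌊θ * (k:ℝ)⌋₊ ≤ k := by
      have : θ * (k:ℝ) ≤ (k:ℝ) := by nlinarith [Nat.cast_nonneg (α := ℝ) k]
      calc ⌊θ * (k:ℝ)⌋₊ ≤ ⌊(k:ℝ)⌋₊ := Nat.floor_le_floor this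
        _ = k := Nat.floor_natCast k
    have hR := aux_mix_rat C R hE hmix hx1 hy1 hx2 hy2 h1 h2 hkpos hfl
    have hθk0 : 0 ≤ θk k := by positivity
    have hθk1 : θk k ≤ 1 := by
      rw [hθk]; dsimp only
      rw [div_le_one (by exact_mod_cast hkpos)]; exact_mod_cast hfl
    exact ⟨hmix _ hx1 _ hx2 _ hθk0 hθk1, hmix _ hy1 _ hy2 _ hθk0 hθk1, hR⟩
  have htp : Filter.Tendsto
      (fun k => (θk k • x1 + (1 - θk k) • x2, θk k • y1 + (1 - θk k) • y2))
      Filter.atTop (nhds (θ • x1 + (1 - θ) • x2, θ • y1 + (1 - θ) • y2)) := by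
    refine Filter.Tendsto.prodMk_nhds ?_ ?_
    · exact (htend.smul_const x1).add ((tendsto_const_nhds.sub htend).smul_const x2)
    · exact (htend.smul_const y1).add ((tendsto_const_nhds.sub htend).smul_const y2)
  have := hG.mem_of_tendsto htp (Filter.eventually_atTop.2 ⟨1, hmem⟩)
  exact this.2.2

lemma aux_identity (hE : ExtMixCancel C R) (hG : ClosedGraphOn C R)
    (hmix : ∀ a ∈ C, ∀ b ∈ C, ∀ r : ℝ, 0 ≤ r → r ≤ 1 → r • a + (1 - r) • b ∈ C)
    {a b x y : S → O → ℝ} (ha : a ∈ C) (hb : b ∈ C) (hx : x ∈ C) (hy : y ∈ C)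
    (hxy : R x y) {t : ℝ} (ht : 0 ≤ t) (heq : a - b = t • (x - y)) : R a b := by
  rcases eq_or_lt_of_le ht with h0 | hpos
  · have hab : a = b := by
      have : a - b = 0 := by rw [heq, ← h0, zero_smul]
      exact sub_eq_zero.1 this
    rw [hab]; exact aux_refl C R hE hb
  · obtain ⟨N, hN⟩ := exists_nat_ge t
    have hN1 : 0 < N := by
      by_contra hc
      push_neg at hc
      interval_cases N
      simp at hN
      linarith
    have hNR : (N:ℝ) ≠ 0 := by positivity
    set lam : ℝ := t / N with hlam
    have hlam0 : 0 ≤ lam := by positivity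
    have hlam1 : lam ≤ 1 := by rw [hlam, div_le_one (by positivity)]; exact hN
    set z := lam • x + (1 - lam) • y with hz
    have hzC : z ∈ C := hmix _ hx _ hy _ hlam0 hlam1
    have hRzy : R z y := by
      have h2 := aux_mix C R hE hG hmix hx hy hy hy hxy (aux_refl C R hE hy) hlam0 hlam1
      have hyy : lam • y + (1 - lam) • y = y := by module
      rwa [hyy] at h2
    refine aux_L1 C R hE (p := N) (q := 0) (N := 1) one_pos hzC hy hy hy ha hb hRzy
      (aux_refl C R hE hy) ?_
    have hab : a = t • (x - y) + b := by rw [← heq]; abel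
    rw [← Nat.cast_smul_eq_nsmul ℝ N z, ← Nat.cast_smul_eq_nsmul ℝ N y]
    simp only [zero_smul, one_smul, zero_nsmul, one_nsmul, add_zero]
    rw [hab, hz, hlam]
    match_scalars <;> (field_simp; try ring)

end Aux

theorem forward
    {S O : Type*} [Fintype S] [Fintype O] [Nonempty S] [Nonempty O]
    (C : Set (S → O → ℝ)) (R : (S → O → ℝ) → (S → O → ℝ) → Prop)
    (hAA : ∀ a ∈ C, IsAAAct a)
    (hclosedC : IsClosed C)
    (hmix : ∀ a ∈ C, ∀ b ∈ C, ∀ r : ℝ, 0 ≤ r → r ≤ 1 → r • a + (1 - r) • b ∈ C)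
    (hE : ExtMixCancel C R) (hG : ClosedGraphOn C R) :
    ∃ U : Set (S → O → ℝ), ∀ a ∈ C, ∀ b ∈ C,
      (R a b ↔ ∀ u ∈ U,
        ∑ s, ∑ o, u s o * a s o ≥ ∑ s, ∑ o, u s o * b s o) := by
  classical
  set D : Set (S → O → ℝ) :=
    (fun p : (S → O → ℝ) × (S → O → ℝ) => p.1 - p.2) ''
      {p | p.1 ∈ C ∧ p.2 ∈ C ∧ R p.1 p.2} with hD
  set coneD : Set (S → O → ℝ) := {w | ∃ t : ℝ, 0 ≤ t ∧ ∃ d ∈ D, w = t • d} with hcone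
  have hDmem : ∀ x y, x ∈ C → y ∈ C → R x y → x - y ∈ D :=
    fun x y hx hy hr => ⟨(x, y), ⟨hx, hy, hr⟩, rfl⟩
  have hDelim : ∀ w ∈ D, ∃ x y, x ∈ C ∧ y ∈ C ∧ R x y ∧ w = x - y := by
    rintro w ⟨⟨x, y⟩, hmem, rfl⟩
    exact ⟨x, y, hmem.1, hmem.2.1, hmem.2.2, rfl⟩
  have hCconv : Convex ℝ C := by
    intro x hx y hy θ1 θ2 h1 h2 hsum
    have := hmix x hx y hy θ1 h1 (by linarith)
    rwa [show (1:ℝ) - θ1 = θ2 by linarith] at this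
  have hCcomp : IsCompact C := by
    have hsub : C ⊆ Metric.closedBall 0 1 := by
      intro x hx
      rw [Metric.mem_closedBall, dist_zero_right]
      refine (pi_norm_le_iff_of_nonneg zero_le_one).2 fun s => ?_
      refine (pi_norm_le_iff_of_nonneg zero_le_one).2 fun o => ?_
      have h1 := (hAA x hx s).1 o
      have h2 : x s o ≤ 1 := by
        have h3 := Finset.single_le_sum (f := x s) (fun o' _ => (hAA x hx s).1 o')
          (Finset.mem_univ o)
        rw [(hAA x hx s).2] at h3; exact h3
      rw [Real.norm_eq_abs, abs_le]; constructor <;> linarith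
    exact (isCompact_closedBall 0 1).of_isClosed_subset hclosedC hsub
  have hDclosed : IsClosed D := by
    have hGsub : {p : (S → O → ℝ) × (S → O → ℝ) | p.1 ∈ C ∧ p.2 ∈ C ∧ R p.1 p.2} ⊆ C ×ˢ C :=
      fun p hp => ⟨hp.1, hp.2.1⟩
    have hGcomp := (hCcomp.prod hCcomp).of_isClosed_subset hG hGsub
    exact (hGcomp.image (continuous_fst.sub continuous_snd)).isClosed
  have hDconv : Convex ℝ D := by
    intro d1 hd1 d2 hd2 θ1 θ2 h1 h2 hsum
    obtain ⟨x1, y1, hx1, hy1, hr1, rfl⟩ := hDelim d1 hd1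
    obtain ⟨x2, y2, hx2, hy2, hr2, rfl⟩ := hDelim d2 hd2
    have hθ2 : θ2 = 1 - θ1 := by linarith
    have hR := aux_mix C R hE hG hmix hx1 hy1 hx2 hy2 hr1 hr2 (θ := θ1) h1 (by linarith)
    refine ⟨(θ1 • x1 + (1 - θ1) • x2, θ1 • y1 + (1 - θ1) • y2),
      ⟨hmix _ hx1 _ hx2 _ h1 (by linarith), hmix _ hy1 _ hy2 _ h1 (by linarith), hR⟩, ?_⟩
    rw [hθ2]; dsimp only; module
  have hident : ∀ x y, x ∈ C → y ∈ C →
      (∃ t : ℝ, 0 ≤ t ∧ ∃ d ∈ D, x - y = t • d) → R x y := by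
    rintro x y hx hy ⟨t, ht, d, hd, heq⟩
    obtain ⟨x', y', hx', hy', hr', hd'⟩ := hDelim d hd
    rw [hd'] at heq
    exact aux_identity C R hE hG hmix hx hy hx' hy' hr' ht heq
  refine ⟨{u | ∀ x y, x ∈ C → y ∈ C → R x y → utilFun u y ≤ utilFun u x},
    fun a ha b hb => ?_⟩
  constructor
  · intro hab u hu
    have := hu a b ha hb hab
    rw [utilFun_apply, utilFun_apply] at this; exact this
  · intro h
    have hD0 : (0 : S → O → ℝ) ∈ D := by
      have := hDmem a a ha ha (aux_refl C R hE ha)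
      rwa [sub_self] at this
    obtain ⟨r, hr, hball⟩ := ball_in_span D (C - C) (hCconv.sub hCconv)
      (fun d hd => by
        obtain ⟨x, y, hx, hy, _, rfl⟩ := hDelim d hd
        exact Set.sub_mem_sub hx hy)
      (fun d hd => by
        obtain ⟨x, y, hx, hy, _, rfl⟩ := hDelim d hd
        have : y - x = -(x - y) := by abel
        rw [← this]
        exact Set.sub_mem_sub hy hx)
      (by have : a - a = (0 : S → O → ℝ) := sub_self a
          rw [← this]; exact Set.sub_mem_sub ha ha)
    have hKimp : ∀ x y, x ∈ C → y ∈ C → x - y ∈ closure coneD → R x y := by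
      intro x y hx hy hK
      by_cases hv : x - y = 0
      · have hxeq : x = y := sub_eq_zero.1 hv
        rw [hxeq]; exact aux_refl C R hE hy
      · obtain ⟨c, hcmem, hctend⟩ := mem_closure_iff_seq_limit.1 hK
        set μ : ℝ := min 1 (r / ‖x - y‖) with hμ
        have hμpos : 0 < μ := lt_min one_pos (div_pos hr (norm_pos_iff.2 hv))
        have hhD : ∀ n, min 1 (r / ‖c n‖) • c n ∈ D := by
          intro n
          obtain ⟨t, ht, d, hd, hcd⟩ := hcmem n
          have hmin0 : 0 ≤ min 1 (r / ‖c n‖) :=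
            le_min zero_le_one (div_nonneg hr.le (norm_nonneg _))
          have hnorm : ‖min 1 (r / ‖c n‖) • c n‖ ≤ r := by
            rw [norm_smul, Real.norm_eq_abs, abs_of_nonneg hmin0]
            by_cases h0 : ‖c n‖ = 0
            · rw [h0, mul_zero]; exact hr.le
            · calc min 1 (r / ‖c n‖) * ‖c n‖ ≤ (r / ‖c n‖) * ‖c n‖ :=
                  mul_le_mul_of_nonneg_right (min_le_right _ _) (norm_nonneg _)
                _ = r := div_mul_cancel₀ r h0
          have hspan : min 1 (r / ‖c n‖) • c n ∈ Submodule.span ℝ D := by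
            rw [hcd]
            exact Submodule.smul_mem _ _ (Submodule.smul_mem _ _ (Submodule.subset_span hd))
          obtain ⟨x', hx', y', hy', hxy'⟩ := Set.mem_sub.1 (hball _ hspan hnorm)
          have hRx'y' : R x' y' :=
            hident x' y' hx' hy' ⟨min 1 (r / ‖c n‖) * t,
              mul_nonneg hmin0 ht, d, hd, by rw [hxy', hcd, smul_smul]⟩
          exact ⟨(x', y'), ⟨hx', hy', hRx'y'⟩, hxy'⟩
        have htendh : Filter.Tendsto (fun n => min 1 (r / ‖c n‖) • c n)
            Filter.atTop (nhds (μ • (x - y))) := by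
          have h1 : Filter.Tendsto (fun n => ‖c n‖) Filter.atTop (nhds ‖x - y‖) :=
            hctend.norm
          have h2 : Filter.Tendsto (fun n => r / ‖c n‖) Filter.atTop (nhds (r / ‖x - y‖)) :=
            tendsto_const_nhds.div h1 (norm_ne_zero_iff.2 hv)
          exact (tendsto_const_nhds.min h2).smul hctend
        have hμv : μ • (x - y) ∈ D :=
          hDclosed.mem_of_tendsto htendh (Filter.Eventually.of_forall hhD)
        exact hident x y hx hy ⟨μ⁻¹, inv_nonneg.2 hμpos.le, μ • (x - y), hμv,
          by rw [smul_smul, inv_mul_cancel₀ hμpos.ne', one_smul]⟩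
    suffices hmemK : a - b ∈ closure coneD by exact hKimp a b ha hb hmemK
    by_contra hnot
    have hconeconv : Convex ℝ coneD := by
      rintro w1 ⟨t1, ht1, d1, hd1, rfl⟩ w2 ⟨t2, ht2, d2, hd2, rfl⟩ θ1 θ2 hθ1 hθ2 hθsum
      by_cases hs : θ1 * t1 + θ2 * t2 = 0
      · have h1 : θ1 * t1 = 0 := by nlinarith [mul_nonneg hθ1 ht1, mul_nonneg hθ2 ht2]
        have h2 : θ2 * t2 = 0 := by nlinarith [mul_nonneg hθ1 ht1, mul_nonneg hθ2 ht2]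
        refine ⟨0, le_refl 0, d1, hd1, ?_⟩
        rw [zero_smul, smul_smul, smul_smul, h1, h2, zero_smul, zero_smul, add_zero]
      · have hspos : 0 < θ1 * t1 + θ2 * t2 :=
          lt_of_le_of_ne (by positivity) (Ne.symm hs)
        refine ⟨θ1 * t1 + θ2 * t2, hspos.le,
          (θ1 * t1 / (θ1 * t1 + θ2 * t2)) • d1 + (θ2 * t2 / (θ1 * t1 + θ2 * t2)) • d2,
          hDconv hd1 hd2 (by positivity) (by positivity) (by field_simp), ?_⟩
        match_scalars <;> field_simp
    obtain ⟨f, α, hfK, hfab⟩ :=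
      geometric_hahn_banach_closed_point hconeconv.closure isClosed_closure hnot
    have h0K : (0 : S → O → ℝ) ∈ closure coneD :=
      subset_closure ⟨0, le_refl 0, 0, hD0, (zero_smul ℝ _).symm⟩
    have hα : 0 < α := by
      have := hfK 0 h0K
      rwa [map_zero] at this
    have hscale : ∀ t : ℝ, 0 ≤ t → ∀ z ∈ closure coneD, t • z ∈ closure coneD := by
      intro t ht z hz
      obtain ⟨c, hcm, hct⟩ := mem_closure_iff_seq_limit.1 hz
      refine mem_closure_of_tendsto (hct.const_smul t) (Filter.Eventually.of_forall fun n => ?_)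
      obtain ⟨t', ht', d, hd, hcd⟩ := hcm n
      exact ⟨t * t', mul_nonneg ht ht', d, hd, by rw [hcd, smul_smul]⟩
    have hfnp : ∀ z ∈ closure coneD, f z ≤ 0 := by
      intro z hz
      by_contra hpos
      push_neg at hpos
      have h1 := hfK _ (hscale (α / f z) (by positivity) z hz)
      rw [map_smul, smul_eq_mul, div_mul_cancel₀ α (ne_of_gt hpos)] at h1
      exact lt_irrefl α h1
    obtain ⟨u0, hu0⟩ := exists_utilFun (-f)
    have hu0U : u0 ∈ {u | ∀ x y, x ∈ C → y ∈ C → R x y → utilFun u y ≤ utilFun u x} := by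
      intro x y hx hy hrxy
      rw [hu0, hu0]
      simp only [ContinuousLinearMap.neg_apply, neg_le_neg_iff]
      have hmem : x - y ∈ closure coneD :=
        subset_closure ⟨1, zero_le_one, x - y, hDmem x y hx hy hrxy, (one_smul _ _).symm⟩
      have := hfnp _ hmem
      rw [map_sub] at this; linarith
    have hcontr := h u0 hu0U
    rw [ge_iff_le, ← utilFun_apply u0, ← utilFun_apply u0, hu0, hu0] at hcontr
    simp only [ContinuousLinearMap.neg_apply, neg_le_neg_iff] at hcontr
    have hfab2 : f (a - b) ≤ 0 := by rw [map_sub]; linarith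
    linarith

theorem backward
    {S O : Type*} [Fintype S] [Fintype O] [Nonempty S] [Nonempty O]
    (C : Set (S → O → ℝ)) (R : (S → O → ℝ) → (S → O → ℝ) → Prop)
    (hclosedC : IsClosed C)
    (U : Set (S → O → ℝ))
    (hU : ∀ a ∈ C, ∀ b ∈ C,
        (R a b ↔ ∀ u ∈ U,
          ∑ s, ∑ o, u s o * a s o ≥ ∑ s, ∑ o, u s o * b s o)) :
    ExtMixCancel C R ∧ ClosedGraphOn C R := by
  classical
  constructor
  · intro n a b hamem hbmem hsum ⟨k, hkn, hlt, hge⟩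
    rw [hU _ (hbmem _) _ (hamem _)]
    intro u hu
    set F := utilFun u with hF
    have hFsum : ∑ i, F (a i) = ∑ i, F (b i) := by
      rw [← map_sum, ← map_sum, hsum]
    set g : Fin (n+1) → ℝ := fun i => F (a i) - F (b i) with hg
    have h0 : ∑ i, g i = 0 := by
      rw [hg]; rw [Finset.sum_sub_distrib, hFsum, sub_self]
    set c := F (a (Fin.last n)) - F (b (Fin.last n)) with hc
    have hsplit := Finset.sum_filter_add_sum_filter_not Finset.univ
      (fun i : Fin (n+1) => (i:ℕ) < k) g
    have hconst : ∀ i ∈ Finset.univ.filter (fun i : Fin (n+1) => ¬ (i:ℕ) < k), g i = c := by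
      intro i hi
      rw [Finset.mem_filter] at hi
      obtain ⟨h1, h2⟩ := hge i (by omega)
      rw [hg]; dsimp only; rw [h1, h2]
    rw [h0, Finset.sum_congr rfl hconst, Finset.sum_const, nsmul_eq_mul] at hsplit
    set m := (Finset.univ.filter (fun i : Fin (n+1) => ¬ (i:ℕ) < k)).card with hm
    have hm1 : 1 ≤ m := by
      refine Finset.card_pos.2 ⟨Fin.last n, ?_⟩
      rw [Finset.mem_filter]
      refine ⟨Finset.mem_univ _, by simp [Fin.last]; omega⟩
    have hS1 : 0 ≤ ∑ i ∈ Finset.univ.filter (fun i : Fin (n+1) => (i:ℕ) < k), g i := by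
      refine Finset.sum_nonneg fun i hi => ?_
      rw [Finset.mem_filter] at hi
      have := (hU _ (hamem i) _ (hbmem i)).1 (hlt i hi.2) u hu
      rw [hg]; dsimp only
      rw [hF, utilFun_apply, utilFun_apply]
      linarith [this]
    have hmR : (1:ℝ) ≤ (m:ℝ) := by exact_mod_cast hm1
    have hcle : c ≤ 0 := by nlinarith
    rw [ge_iff_le, ← utilFun_apply u, ← utilFun_apply u, ← hF]
    linarith [hcle]
  · unfold ClosedGraphOn
    have hset : {p : (S → O → ℝ) × (S → O → ℝ) | p.1 ∈ C ∧ p.2 ∈ C ∧ R p.1 p.2}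
        = (C ×ˢ C) ∩ ⋂ u ∈ U, {p : (S → O → ℝ) × (S → O → ℝ) |
            utilFun u p.2 ≤ utilFun u p.1} := by
      ext p
      simp only [Set.mem_setOf_eq, Set.mem_inter_iff, Set.mem_prod, Set.mem_iInter]
      constructor
      · rintro ⟨h1, h2, h3⟩
        refine ⟨⟨h1, h2⟩, fun u hu => ?_⟩
        have := (hU _ h1 _ h2).1 h3 u hu
        rw [utilFun_apply, utilFun_apply]; exact this
      · rintro ⟨⟨h1, h2⟩, h3⟩
        refine ⟨h1, h2, (hU _ h1 _ h2).2 fun u hu => ?_⟩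
        have := h3 u hu
        rw [utilFun_apply, utilFun_apply] at this; exact this
    rw [hset]
    refine IsClosed.inter (hclosedC.prod hclosedC) (isClosed_biInter fun u hu => ?_)
    exact isClosed_le ((utilFun u).continuous.comp continuous_snd)
      ((utilFun u).continuous.comp continuous_fst)

/-- A relation on a closed, mixture-closed set of AA acts satisfies extended mixture
cancellation and has closed graph iff it has an additively separable multi-utility
representation. -/
theorem extMixCancel_closedGraph_iff_multiUtilityRep
    {S O : Type*} [Fintype S] [Fintype O] [Nonempty S] [Nonempty O]
    (C : Set (S → O → ℝ)) (R : (S → O → ℝ) → (S → O → ℝ) → Prop)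
    (hAA : ∀ a ∈ C, IsAAAct a)
    (hclosedC : IsClosed C)
    (hmix : ∀ a ∈ C, ∀ b ∈ C, ∀ r : ℝ, 0 ≤ r → r ≤ 1 → r • a + (1 - r) • b ∈ C) :
    (ExtMixCancel C R ∧ ClosedGraphOn C R) ↔
      ∃ U : Set (S → O → ℝ), ∀ a ∈ C, ∀ b ∈ C,
        (R a b ↔ ∀ u ∈ U,
          ∑ s, ∑ o, u s o * a s o ≥ ∑ s, ∑ o, u s o * b s o) := by
  constructor
  · rintro ⟨hE, hG⟩
    exact forward C R hAA hclosedC hmix hE hG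
  · rintro ⟨U, hU⟩
    exact backward C R hclosedC U hU
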